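/- arXiv:1703.07586 — 4 statements merged into one kernel-verified Lean document; each statement's English description precedes it below -/
import Mathlib

section
/- SP is a minimal mapping cone: SP ⊆ J for every mapping cone J ⊆ P. -/
open scoped ComplexOrder Kronecker
open Matrix

namespace Paper

/-- The algebra `M_n` of `n × n` complex matrices. -/
abbrev Mat (n : ℕ) := Matrix (Fin n) (Fin n) ℂ

/-- Linear maps of `M_n` into itself. -/
abbrev MatMap (n : ℕ) := Mat n →ₗ[ℂ] Mat n

/-- The matrix algebra `M_n ⊗ M_n`, realized as matrices indexed by pairs. -/
abbrev BigMat (n : ℕ) := Matrix (Fin n × Fin n) (Fin n × Fin n) ℂ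

variable {n : ℕ}

/-- A map `φ : M_n → M_n` is positive if it maps positive semidefinite matrices to
positive semidefinite matrices.  The set of such maps is the cone `P`. -/
def IsPosMap (φ : MatMap n) : Prop :=
  ∀ a : Mat n, a.PosSemidef → (φ a).PosSemidef

/-- The Choi matrix `C_φ = Σ_{i,j} e_{ij} ⊗ φ(e_{ij})`. -/
noncomputable def choiMatrix (φ : MatMap n) : BigMat n :=
  Matrix.of fun p q => φ (Matrix.single p.1 q.1 1) p.2 q.2

/-- `φ` is completely positive iff its Choi matrix is positive semidefinite.
The set of such maps is the cone `CP`. -/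
def IsCP (φ : MatMap n) : Prop := (choiMatrix φ).PosSemidef

/-- The transpose map `a ↦ aᵀ` on `M_n`, as a linear map. -/
noncomputable def transposeMap (n : ℕ) : MatMap n where
  toFun a := a.transpose
  map_add' a b := Matrix.transpose_add a b
  map_smul' c a := Matrix.transpose_smul c a

/-- `φ` is co-completely positive if `t ∘ φ` is completely positive.  The set of
such maps is the cone `coCP`. -/
def IsCoCP (φ : MatMap n) : Prop := IsCP ((transposeMap n) ∘ₗ φ)

/-- A state on `M_n`: a positive linear functional with `ω(1) = 1`. -/
def IsState (ω : Mat n →ₗ[ℂ] ℂ) : Prop :=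
  (∀ a : Mat n, a.PosSemidef → 0 ≤ ω a) ∧ ω 1 = 1

/-- `φ` is super-positive if `φ(a) = Σ_i ω_i(a) b_i` with each `b_i` positive
semidefinite and each `ω_i` a state.  The set of such maps is the cone `SP`. -/
def IsSP (φ : MatMap n) : Prop :=
  ∃ (k : ℕ) (b : Fin k → Mat n) (ω : Fin k → (Mat n →ₗ[ℂ] ℂ)),
    (∀ i, (b i).PosSemidef) ∧ (∀ i, IsState (ω i)) ∧
      ∀ a : Mat n, φ a = ∑ i, ω i a • b i

/-- `ψ = φ*`, i.e. `Tr(φ(a) b) = Tr(a ψ(b))` for all `a, b`. -/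
def IsAdjointPair (φ ψ : MatMap n) : Prop :=
  ∀ a b : Mat n, (φ a * b).trace = (a * ψ b).trace

/-- The map `φ^t : a ↦ φ(aᵀ)ᵀ`. -/
noncomputable def mapTranspose (φ : MatMap n) : MatMap n :=
  transposeMap n ∘ₗ φ ∘ₗ transposeMap n

/-- A (symmetric) mapping cone: a nonzero closed convex cone of positive maps of `M_n`
into itself, closed under compositions `α ∘ φ ∘ β` with `α, β` completely positive,
and closed under `φ ↦ φ*` and `φ ↦ φ^t`. -/
structure IsMappingCone (J : Set (MatMap n)) : Prop where
  pos : ∀ φ ∈ J, IsPosMap φ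
  nonzero : ∃ φ ∈ J, φ ≠ 0
  closed : IsClosed ((fun φ : MatMap n => (φ : Mat n → Mat n)) '' J)
  add_mem : ∀ φ ∈ J, ∀ ψ ∈ J, φ + ψ ∈ J
  smul_mem : ∀ c : ℝ, 0 ≤ c → ∀ φ ∈ J, (c : ℂ) • φ ∈ J
  comp_mem : ∀ φ ∈ J, ∀ α β : MatMap n, IsCP α → IsCP β → α ∘ₗ φ ∘ₗ β ∈ J
  adjoint_mem : ∀ φ ∈ J, ∀ ψ : MatMap n, IsAdjointPair φ ψ → ψ ∈ J
  transpose_mem : ∀ φ ∈ J, mapTranspose φ ∈ J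

/-- An invariant mapping cone: a mapping cone closed under compositions
`α ∘ φ ∘ β` with `α, β` arbitrary positive maps. -/
structure IsInvariantMappingCone (J : Set (MatMap n)) extends IsMappingCone J : Prop where
  comp_pos_mem : ∀ φ ∈ J, ∀ α β : MatMap n, IsPosMap α → IsPosMap β → α ∘ₗ φ ∘ₗ β ∈ J

/-- The dual cone `J° = {φ ∈ P : Tr(C_φ C_ψ) ≥ 0 ∀ ψ ∈ J}`. -/
def dualCone (J : Set (MatMap n)) : Set (MatMap n) :=
  {φ | IsPosMap φ ∧ ∀ ψ ∈ J, 0 ≤ (choiMatrix φ * choiMatrix ψ).trace}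

/-- The linear functional `φ̃` on `M_n ⊗ M_n` with `φ̃(a ⊗ b) = Tr(φ(a) bᵀ)`;
equivalently the functional with density matrix `C_φᵗ`. -/
noncomputable def tilde (φ : MatMap n) : BigMat n →ₗ[ℂ] ℂ where
  toFun x := ((choiMatrix φ)ᵀ * x).trace
  map_add' x y := by simp [Matrix.mul_add]
  map_smul' c x := by simp [Matrix.mul_smul]

/-- A positive linear functional on a matrix algebra. -/
def IsPosFunctional {m : Type*} [Fintype m] [DecidableEq m]
    (f : Matrix m m ℂ →ₗ[ℂ] ℂ) : Prop :=
  ∀ x : Matrix m m ℂ, x.PosSemidef → 0 ≤ f x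

/-- The map `ι ⊗ α` on `M_n ⊗ M_n`, acting as `α` on each block. -/
noncomputable def idTensor (α : MatMap n) : BigMat n →ₗ[ℂ] BigMat n where
  toFun x := Matrix.of fun p q => α (Matrix.of fun k l => x (p.1, k) (q.1, l)) p.2 q.2
  map_add' x y := by
    ext p q
    have h : (Matrix.of fun k l => x (p.1, k) (q.1, l) + y (p.1, k) (q.1, l))
        = (Matrix.of fun k l => x (p.1, k) (q.1, l)) +
          (Matrix.of fun k l => y (p.1, k) (q.1, l)) := by
      ext k l; simp
    simp only [Matrix.of_apply, Matrix.add_apply]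
    rw [h, map_add, Matrix.add_apply]
  map_smul' c x := by
    ext p q
    have h : (Matrix.of fun k l => c * x (p.1, k) (q.1, l))
        = c • (Matrix.of fun k l => x (p.1, k) (q.1, l)) := by
      ext k l; simp
    simp only [Matrix.of_apply, Matrix.smul_apply, RingHom.id_apply, smul_eq_mul]
    rw [h, _root_.map_smul, Matrix.smul_apply, smul_eq_mul]

/-- `Ad V : x ↦ V* x V`. -/
noncomputable def adMap (V : Mat n) : MatMap n where
  toFun x := Vᴴ * x * V
  map_add' x y := by simp [Matrix.mul_add, Matrix.add_mul]
  map_smul' c x := by simp [Matrix.mul_smul, Matrix.smul_mul]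

/-- An orthogonal projection in `M_n`. -/
def IsProjection (e : Mat n) : Prop := e * e = e ∧ eᴴ = e

/-- `e` is the range projection of the matrix `a`: the smallest projection `e`
with `e a = a`. -/
def IsRangeProjection (e a : Mat n) : Prop :=
  IsProjection e ∧ e * a = a ∧ ∀ f : Mat n, IsProjection f → f * a = a → f * e = e

/-- `e` is the support projection of the positive map `φ`: the smallest projection
`e` with `φ(e a e) = φ(a)` for all `a`. -/
def IsSupportProjection (e : Mat n) (φ : MatMap n) : Prop :=
  IsProjection e ∧ (∀ a : Mat n, φ (e * a * e) = φ a) ∧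
    ∀ f : Mat n, IsProjection f → (∀ a : Mat n, φ (f * a * f) = φ a) → f * e = e

/-- `D_2`: the smallest invariant mapping cone containing `Ad e` for all rank 2
projections `e`. -/
def D2 (n : ℕ) : Set (MatMap n) :=
  ⋂₀ {J : Set (MatMap n) | IsInvariantMappingCone J ∧
      ∀ e : Mat n, IsProjection e → e.rank = 2 → adMap e ∈ J}

/-- The invariant mapping cone generated by a map `φ`. -/
def genInvCone (φ : MatMap n) : Set (MatMap n) :=
  ⋂₀ {J : Set (MatMap n) | IsInvariantMappingCone J ∧ φ ∈ J}

/-- The smallest mapping cone containing two given sets of maps. -/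
def coneJoin (A B : Set (MatMap n)) : Set (MatMap n) :=
  ⋂₀ {J : Set (MatMap n) | IsMappingCone J ∧ A ⊆ J ∧ B ⊆ J}

/-- `φ` is decomposable, i.e. `φ ∈ CP ⋁ coCP`: a sum of a completely positive and a
co-completely positive map. -/
def Decomposable (φ : MatMap n) : Prop :=
  ∃ α β : MatMap n, IsCP α ∧ IsCoCP β ∧ φ = α + β

/-- `φ` is a PPT-map: both `φ̃` and `φ̃ ∘ (ι ⊗ t)` are positive linear functionals. -/
def IsPPTMap (φ : MatMap n) : Prop :=
  IsPosFunctional (tilde φ) ∧ IsPosFunctional (tilde φ ∘ₗ idTensor (transposeMap n))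

/-- `φ` is an extremal positive map. -/
def IsExtremal (φ : MatMap n) : Prop :=
  IsPosMap φ ∧ ∀ ψ : MatMap n, IsPosMap ψ → IsPosMap (φ - ψ) →
    ∃ l : ℝ, 0 ≤ l ∧ l ≤ 1 ∧ ψ = (l : ℂ) • φ

/-- A `*`-automorphism of `M_n`. -/
def IsStarAut (φ : MatMap n) : Prop :=
  Function.Bijective φ ∧ (∀ a b : Mat n, φ (a * b) = φ a * φ b) ∧
    ∀ a : Mat n, φ aᴴ = (φ a)ᴴ

/-- A `*`-anti-automorphism of `M_n`. -/
def IsStarAntiAut (φ : MatMap n) : Prop :=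
  Function.Bijective φ ∧ (∀ a b : Mat n, φ (a * b) = φ b * φ a) ∧
    ∀ a : Mat n, φ aᴴ = (φ a)ᴴ

lemma psd_vecMulVec (z : Fin n → ℂ) : (Matrix.vecMulVec z (star z)).PosSemidef := by
  rw [Matrix.posSemidef_iff_dotProduct_mulVec]
  constructor
  · ext a b
    simp [Matrix.vecMulVec_apply, mul_comm]
  · intro v
    have h1 : (Matrix.vecMulVec z (star z)) *ᵥ v = (star z ⬝ᵥ v) • z := by
      ext a
      simp [Matrix.mulVec, Matrix.vecMulVec_apply, dotProduct, Finset.mul_sum,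
        mul_comm, mul_assoc, mul_left_comm]
    have h2 : star v ⬝ᵥ ((star z ⬝ᵥ v) • z) = star (star z ⬝ᵥ v) * (star z ⬝ᵥ v) := by
      simp [dotProduct, Finset.mul_sum, star_sum, Finset.sum_mul, mul_comm, mul_assoc,
        mul_left_comm]
      rw [Finset.sum_comm]
    rw [h1, h2]
    exact star_mul_self_nonneg _

lemma psd_eq_ct_mul_self {A : Mat n} (hA : A.PosSemidef) : ∃ B : Mat n, A = Bᴴ * B := by
  open scoped MatrixOrder in
  obtain ⟨B, hB⟩ := CStarAlgebra.nonneg_iff_eq_star_mul_self.mp hA.nonneg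
  exact ⟨B, by rw [hB, Matrix.star_eq_conjTranspose]⟩

lemma psd_pairMul {A B : Mat n} (hA : A.PosSemidef) (hB : B.PosSemidef) :
    (Matrix.of fun p q : Fin n × Fin n => A p.1 q.1 * B p.2 q.2).PosSemidef := by
  obtain ⟨C, rfl⟩ := psd_eq_ct_mul_self hA
  obtain ⟨D, rfl⟩ := psd_eq_ct_mul_self hB
  have h : (Matrix.of fun p q : Fin n × Fin n => (Cᴴ*C) p.1 q.1 * (Dᴴ*D) p.2 q.2)
      = (Matrix.of fun r p : Fin n × Fin n => C r.1 p.1 * D r.2 p.2)ᴴ *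
        (Matrix.of fun r p : Fin n × Fin n => C r.1 p.1 * D r.2 p.2) := by
    ext p q
    simp only [Matrix.of_apply, Matrix.mul_apply, Matrix.conjTranspose_apply,
      Fintype.sum_prod_type, star_mul']
    rw [Finset.sum_mul_sum]
    apply Finset.sum_congr rfl
    intro r _
    apply Finset.sum_congr rfl
    intro s _
    ring
  rw [h]
  exact Matrix.posSemidef_conjTranspose_mul_self _

lemma stdBasis_mem_span (i j : Fin n) :
    Matrix.single i j (1:ℂ) ∈ Submodule.span ℂ {a : Mat n | a.PosSemidef} := by
  have hy : (Pi.single j (1:ℂ) : Fin n → ℂ) = star (Pi.single j (1:ℂ) : Fin n → ℂ) := by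
    ext k
    simp [Pi.single_apply, apply_ite]
  rw [Matrix.single_eq_single_vecMulVec_single]
  set x : Fin n → ℂ := Pi.single i 1
  set y : Fin n → ℂ := Pi.single j 1
  have key : Matrix.vecMulVec x (star y) = (4:ℂ)⁻¹ •
      (Matrix.vecMulVec (x+y) (star (x+y)) +
        Complex.I • Matrix.vecMulVec (x + Complex.I • y) (star (x + Complex.I • y)) -
        Matrix.vecMulVec (x - y) (star (x - y)) -
        Complex.I • Matrix.vecMulVec (x - Complex.I • y) (star (x - Complex.I • y))) := by
    ext a b
    simp only [Matrix.vecMulVec_apply, Matrix.smul_apply, Matrix.add_apply, Matrix.sub_apply,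
      Pi.add_apply, Pi.sub_apply, Pi.smul_apply, Pi.star_apply, smul_eq_mul,
      Complex.star_def, map_add, map_sub, _root_.map_mul, Complex.conj_I]
    ring_nf
    simp only [Complex.I_sq]
    ring
  rw [show Matrix.vecMulVec x y = Matrix.vecMulVec x (star y) by rw [← hy], key]
  refine Submodule.smul_mem _ _ (Submodule.sub_mem _ (Submodule.sub_mem _ (Submodule.add_mem _ ?_ ?_) ?_) ?_)
  · exact Submodule.subset_span (psd_vecMulVec _)
  · exact Submodule.smul_mem _ _ (Submodule.subset_span (psd_vecMulVec _))
  · exact Submodule.subset_span (psd_vecMulVec _)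
  · exact Submodule.smul_mem _ _ (Submodule.subset_span (psd_vecMulVec _))

lemma span_psd : Submodule.span ℂ {a : Mat n | a.PosSemidef} = ⊤ := by
  rw [eq_top_iff]
  intro a _
  rw [Matrix.matrix_eq_sum_single a]
  refine Submodule.sum_mem _ fun i _ => Submodule.sum_mem _ fun j _ => ?_
  have h : Matrix.single i j (a i j) = a i j • Matrix.single i j (1:ℂ) := by
    rw [Matrix.smul_single, smul_eq_mul, mul_one]
  rw [h]
  exact Submodule.smul_mem _ _ (stdBasis_mem_span i j)

lemma ext_psd {N : Type*} [AddCommMonoid N] [Module ℂ N] {f g : Mat n →ₗ[ℂ] N}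
    (h : ∀ a : Mat n, a.PosSemidef → f a = g a) : f = g :=
  LinearMap.ext_on span_psd h


/-- The functional `a ↦ star (ω aᴴ)`. -/
noncomputable def conjFunctional (ω : Mat n →ₗ[ℂ] ℂ) : Mat n →ₗ[ℂ] ℂ where
  toFun a := star (ω aᴴ)
  map_add' a b := by simp [Matrix.conjTranspose_add]
  map_smul' c a := by
    simp [Matrix.conjTranspose_smul, smul_eq_mul, mul_comm]

/-- The entry functional `x ↦ x m m`. -/
noncomputable def entryF (m : Fin n) : Mat n →ₗ[ℂ] ℂ where
  toFun x := x m m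
  map_add' x y := rfl
  map_smul' c x := rfl

lemma entryF_apply (m : Fin n) (x : Mat n) : entryF m x = x m m := rfl

lemma smulRight_mem {J : Set (MatMap n)} (hJ : IsMappingCone J)
    (ω : Mat n →ₗ[ℂ] ℂ) (hω : ∀ a : Mat n, a.PosSemidef → 0 ≤ ω a)
    (b : Mat n) (hb : b.PosSemidef) : ω.smulRight b ∈ J := by
  obtain ⟨φ₀, hφ₀J, hφ₀ne⟩ := hJ.nonzero
  have hφ₀pos := hJ.pos φ₀ hφ₀J
  -- find a PSD matrix not killed by φ₀
  have hd : ∃ d : Mat n, d.PosSemidef ∧ φ₀ d ≠ 0 := by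
    by_contra h
    push_neg at h
    exact hφ₀ne (ext_psd fun a ha => by simp [h a ha])
  obtain ⟨d, hdpsd, hAne⟩ := hd
  set A := φ₀ d with hAdef
  have hApsd : A.PosSemidef := hφ₀pos d hdpsd
  -- find a nonzero diagonal entry of A
  have hm : ∃ m, A m m ≠ 0 := by
    by_contra h
    push_neg at h
    apply hAne
    obtain ⟨C, hC⟩ := psd_eq_ct_mul_self hApsd
    have hCz : C = 0 := by
      ext r m
      have hdiag := h m
      rw [hC] at hdiag
      have hsum : ∑ r, star (C r m) * C r m = 0 := by
        simpa [Matrix.mul_apply, Matrix.conjTranspose_apply] using hdiag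
      have := (Finset.sum_eq_zero_iff_of_nonneg
        (fun r _ => star_mul_self_nonneg (C r m))).mp hsum r (Finset.mem_univ r)
      simpa using (CStarRing.star_mul_self_eq_zero_iff (C r m)).mp this
    rw [hC, hCz]
    simp
  obtain ⟨m, hmne⟩ := hm
  have hAmm_nonneg : 0 ≤ A m m := by
    have h := hApsd.dotProduct_mulVec_nonneg (Pi.single m 1)
    have heq : star (Pi.single m (1:ℂ) : Fin n → ℂ) ⬝ᵥ A *ᵥ (Pi.single m 1) = A m m := by
      simp [dotProduct, Matrix.mulVec, Pi.single_apply, Pi.star_apply, apply_ite,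
        Finset.sum_ite_eq, mul_comm]
    rwa [heq] at h
  set r : ℝ := (A m m).re with hrdef
  have hr_nonneg : 0 ≤ r := (Complex.le_def.mp hAmm_nonneg).1
  have hAmm : A m m = (r : ℂ) := by
    have him : (A m m).im = 0 := ((Complex.le_def.mp hAmm_nonneg).2).symm
    exact Complex.ext rfl him
  have hrne : r ≠ 0 := by
    intro h0
    apply hmne
    rw [hAmm, h0, Complex.ofReal_zero]
  -- the CP map β : a ↦ ω(a) • d
  set β : MatMap n := ω.smulRight d with hβdef
  have hΩ : (Matrix.of fun i j : Fin n =>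
      ω (Matrix.single i j 1)).PosSemidef := by
    set Ω : Mat n := Matrix.of fun i j : Fin n => ω (Matrix.single i j 1) with hΩdef
    have hconj : ∀ a : Mat n, ω aᴴ = star (ω a) := by
      have hcf : conjFunctional ω = ω := by
        apply ext_psd
        intro a ha
        have h := hω a ha
        have him : (ω a).im = 0 := ((Complex.le_def.mp h).2).symm
        simp only [conjFunctional, LinearMap.coe_mk, AddHom.coe_mk]
        rw [ha.1.eq]
        simp [Complex.star_def, Complex.ext_iff, him]
      intro a
      have h2 := congrArg (fun f : Mat n →ₗ[ℂ] ℂ => f aᴴ) hcf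
      simp only [conjFunctional, LinearMap.coe_mk, AddHom.coe_mk,
        Matrix.conjTranspose_conjTranspose] at h2
      exact h2.symm
    rw [Matrix.posSemidef_iff_dotProduct_mulVec]
    constructor
    · ext i j
      simp only [Matrix.conjTranspose_apply, hΩdef, Matrix.of_apply]
      rw [← hconj]
      congr 1
      ext a b
      simp only [Matrix.conjTranspose_apply, Matrix.single, Matrix.of_apply]
      by_cases hia : i = a <;> by_cases hjb : j = b <;> simp [hia, hjb, and_comm]
    · intro v
      have hv : Matrix.vecMulVec (star v) v
          = ∑ i, ∑ j, (star (v i) * v j) • Matrix.single i j (1:ℂ) := by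
        rw [Matrix.matrix_eq_sum_single (Matrix.vecMulVec (star v) v)]
        refine Finset.sum_congr rfl fun i _ => Finset.sum_congr rfl fun j _ => ?_
        rw [Matrix.smul_single, smul_eq_mul, mul_one, Matrix.vecMulVec_apply,
          Pi.star_apply]
      have hform : star v ⬝ᵥ Ω *ᵥ v = ω (Matrix.vecMulVec (star v) v) := by
        rw [hv]
        simp only [map_sum, _root_.map_smul, smul_eq_mul]
        simp only [dotProduct, Matrix.mulVec, hΩdef, Matrix.of_apply, Finset.mul_sum,
          Pi.star_apply]
        refine Finset.sum_congr rfl fun i _ => Finset.sum_congr rfl fun j _ => ?_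
        ring
      rw [hform]
      have hpsd : (Matrix.vecMulVec (star v) v).PosSemidef := by
        have := psd_vecMulVec (star v)
        rwa [star_star] at this
      exact hω _ hpsd
  have hβCP : IsCP β := by
    have h : choiMatrix β = Matrix.of fun p q : Fin n × Fin n =>
        (Matrix.of fun i j : Fin n => ω (Matrix.single i j 1)) p.1 q.1 * d p.2 q.2 := by
      ext p q
      simp [choiMatrix, hβdef, LinearMap.smulRight_apply, Matrix.smul_apply, smul_eq_mul]
    rw [IsCP, h]
    exact psd_pairMul hΩ hdpsd
  -- the CP map α : x ↦ (r⁻¹ * x m m) • b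
  set α : MatMap n := (((r:ℂ)⁻¹) • entryF m).smulRight b with hαdef
  have hαCP : IsCP α := by
    set z : Fin n → ℂ := Pi.single m ((Real.sqrt r⁻¹ : ℝ) : ℂ) with hzdef
    have hc0 : (((Real.sqrt r : ℝ) : ℂ))⁻¹ * (((Real.sqrt r : ℝ) : ℂ))⁻¹ = (r:ℂ)⁻¹ := by
      rw [← mul_inv, ← Complex.ofReal_mul, Real.mul_self_sqrt hr_nonneg]
    have hz : Matrix.vecMulVec z (star z)
        = Matrix.of fun i j : Fin n =>
            (r:ℂ)⁻¹ * Matrix.single i j (1:ℂ) m m := by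
      ext a b
      simp only [Matrix.vecMulVec_apply, Pi.star_apply, hzdef, Pi.single_apply,
        Matrix.of_apply, Matrix.single, Complex.star_def, Complex.conj_ofReal]
      by_cases ham : a = m <;> by_cases hbm : b = m <;>
        simp [ham, hbm, apply_ite, hc0]
    have h : choiMatrix α = Matrix.of fun p q : Fin n × Fin n =>
        (Matrix.vecMulVec z (star z)) p.1 q.1 * b p.2 q.2 := by
      ext p q
      rw [hz]
      simp [choiMatrix, hαdef, entryF_apply, LinearMap.smulRight_apply, Matrix.smul_apply,
        smul_eq_mul, mul_assoc]
    rw [IsCP, h]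
    exact psd_pairMul (psd_vecMulVec z) hb
  -- α ∘ φ₀ ∘ β is the map a ↦ ω(a) • b
  have hcomp : α ∘ₗ φ₀ ∘ₗ β = ω.smulRight b := by
    apply LinearMap.ext
    intro a
    simp only [LinearMap.comp_apply, hβdef, hαdef, LinearMap.smulRight_apply,
      _root_.map_smul, LinearMap.smul_apply, entryF_apply, LinearMap.coe_mk, AddHom.coe_mk,
      Matrix.smul_apply, smul_eq_mul, ← hAdef]
    rw [hAmm]
    congr 1
    field_simp
    rw [one_smul]
  rw [← hcomp]
  exact hJ.comp_mem φ₀ hφ₀J α β hαCP hβCP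

/-- Lemma 1, second part. `SP` is a minimal mapping cone:
`SP ⊆ J` for every mapping cone `J`. -/
theorem statement_1 (n : ℕ) (hn : 0 < n) (J : Set (MatMap n)) (hJ : IsMappingCone J) :
    {φ : MatMap n | IsSP φ} ⊆ J := by
  intro φ hφ
  obtain ⟨k, b, ω, hb, hω, hφa⟩ := hφ
  have h0 : (0 : MatMap n) ∈ J := by
    obtain ⟨ψ, hψ, _⟩ := hJ.nonzero
    have := hJ.smul_mem 0 le_rfl ψ hψ
    simpa using this
  have hT : ∀ i, (ω i).smulRight (b i) ∈ J := fun i =>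
    smulRight_mem hJ (ω i) (hω i).1 (b i) (hb i)
  have hsum : (∑ i, (ω i).smulRight (b i)) ∈ J :=
    Finset.sum_induction _ (· ∈ J) (fun x y hx hy => hJ.add_mem x hx y hy) h0
      (fun i _ => hT i)
  have hφeq : φ = ∑ i, (ω i).smulRight (b i) := by
    apply LinearMap.ext
    intro a
    rw [hφa a]
    simp [LinearMap.sum_apply, LinearMap.smulRight_apply]
  rw [hφeq]
  exact hsum

end Paper
end

section
/- Let J be a mapping cone in P and φ ∈ P. Then the following conditions are equivalent: (i) φ ∈ J°; (ii) φ∘α ∈ CP for all α ∈ J; (iii) α∘φ ∈ CP for all α ∈ J; (iv) φ̃∘(ι⊗α) is a positive linear functional for all α ∈ J; (v) (ι⊗α)(C_φ) is positive semidefinite for all α ∈ J, where ι is the identity map on M_n. -/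
open scoped ComplexOrder Kronecker
open Matrix

namespace Paper

variable {n : ℕ}

section Aux

/-! ### Auxiliary lemmas for Statement 2 -/

/-- Trace against a standard basis matrix on the right extracts an entry. -/
lemma trace_mul_stdBasisMatrix (M : Mat n) (s r : Fin n) :
    (M * Matrix.single s r 1).trace = M r s := by
  simp [Matrix.trace, Matrix.diag, Matrix.mul_apply, Matrix.single, ite_and,
    Finset.sum_ite_eq, Finset.sum_ite_eq']

/-- Trace against a standard basis matrix on the left extracts an entry. -/
lemma stdBasisMatrix_mul_trace (i k : Fin n) (N : Mat n) :
    (Matrix.single i k (1 : ℂ) * N).trace = N k i := by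
  simp [Matrix.trace, Matrix.diag, Matrix.mul_apply, Matrix.single, ite_and,
    Finset.sum_ite_eq, Finset.sum_ite_eq']

/-- The trace pairing of two maps through their Choi matrices. -/
noncomputable def pairT (φ ψ : MatMap n) : ℂ :=
  (choiMatrix φ * choiMatrix ψ).trace

lemma pairT_eq (φ ψ : MatMap n) :
    pairT φ ψ = ∑ i, ∑ k,
      ((φ (Matrix.single i k 1)) * (ψ (Matrix.single k i 1))).trace := by
  simp only [pairT, Matrix.trace, Matrix.diag, Matrix.mul_apply, choiMatrix,
    Matrix.of_apply, Fintype.sum_prod_type]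
  exact Finset.sum_congr rfl fun i _ => Finset.sum_comm

/-- The adjoint map `φ*` of `φ` with respect to the trace bilinear form. -/
noncomputable def adjMap (φ : MatMap n) : MatMap n where
  toFun b := Matrix.of fun p q => (φ (Matrix.single q p 1) * b).trace
  map_add' b c := by
    ext p q
    simp [Matrix.mul_add]
  map_smul' c b := by
    ext p q
    simp [Matrix.mul_smul]

lemma adjMap_apply (φ : MatMap n) (b : Mat n) (p q : Fin n) :
    adjMap φ b p q = (φ (Matrix.single q p 1) * b).trace := rfl

lemma phi_apply_eq_sum (φ : MatMap n) (a : Mat n) :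
    φ a = ∑ i, ∑ k, a i k • φ (Matrix.single i k 1) := by
  conv_lhs => rw [matrix_eq_sum_single a]
  rw [map_sum]
  refine Finset.sum_congr rfl fun i _ => ?_
  rw [map_sum]
  refine Finset.sum_congr rfl fun k _ => ?_
  have hst : Matrix.single i k (a i k) = a i k • Matrix.single i k 1 := by
    rw [smul_single, smul_eq_mul, mul_one]
  rw [hst]
  exact φ.map_smul _ _

lemma isAdjointPair_adjMap (φ : MatMap n) : IsAdjointPair φ (adjMap φ) := by
  intro a b
  rw [phi_apply_eq_sum φ a]
  rw [Finset.sum_mul, Matrix.trace_sum]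
  have hR : (a * adjMap φ b).trace = ∑ i, ∑ k, a i k * (φ (Matrix.single i k 1) * b).trace := by
    simp only [Matrix.trace, Matrix.diag, Matrix.mul_apply, adjMap_apply]
  rw [hR]
  refine Finset.sum_congr rfl fun i _ => ?_
  rw [Finset.sum_mul, Matrix.trace_sum]
  refine Finset.sum_congr rfl fun k _ => ?_
  rw [Matrix.smul_mul, Matrix.trace_smul, smul_eq_mul]

lemma IsAdjointPair.symm {φ ψ : MatMap n} (h : IsAdjointPair φ ψ) :
    IsAdjointPair ψ φ := by
  intro a b
  rw [Matrix.trace_mul_comm, Matrix.trace_mul_comm a (φ b), ← h b a]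

lemma pairT_comp_left {α α' : MatMap n} (h : IsAdjointPair α α') (φ ψ : MatMap n) :
    pairT (α ∘ₗ φ) ψ = pairT φ (α' ∘ₗ ψ) := by
  rw [pairT_eq, pairT_eq]
  exact Finset.sum_congr rfl fun i _ => Finset.sum_congr rfl fun k _ =>
    h (φ (Matrix.single i k 1)) (ψ (Matrix.single k i 1))

lemma sum4_swap {M : Type*} [AddCommMonoid M] (f : Fin n → Fin n → Fin n → Fin n → M) :
    ∑ i, ∑ k, ∑ r, ∑ s, f i k r s = ∑ r, ∑ s, ∑ i, ∑ k, f i k r s := by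
  calc ∑ i, ∑ k, ∑ r, ∑ s, f i k r s
      = ∑ i, ∑ r, ∑ k, ∑ s, f i k r s := Finset.sum_congr rfl fun i _ => Finset.sum_comm
    _ = ∑ r, ∑ i, ∑ k, ∑ s, f i k r s := Finset.sum_comm
    _ = ∑ r, ∑ i, ∑ s, ∑ k, f i k r s := Finset.sum_congr rfl fun r _ =>
          Finset.sum_congr rfl fun i _ => Finset.sum_comm
    _ = ∑ r, ∑ s, ∑ i, ∑ k, f i k r s := Finset.sum_congr rfl fun r _ => Finset.sum_comm

lemma pairT_comp_right {α α' : MatMap n} (h : IsAdjointPair α α') (φ ψ : MatMap n) :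
    pairT (φ ∘ₗ α) ψ = pairT φ (ψ ∘ₗ α') := by
  rw [pairT_eq, pairT_eq]
  have hL : ∀ i k : Fin n,
      ((φ (α (Matrix.single i k 1))) * (ψ (Matrix.single k i 1))).trace
        = ∑ r, ∑ s, α (Matrix.single i k 1) r s *
            ((φ (Matrix.single r s 1)) * (ψ (Matrix.single k i 1))).trace := by
    intro i k
    rw [phi_apply_eq_sum φ (α (Matrix.single i k 1)), Finset.sum_mul, Matrix.trace_sum]
    refine Finset.sum_congr rfl fun r _ => ?_
    rw [Finset.sum_mul, Matrix.trace_sum]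
    refine Finset.sum_congr rfl fun s _ => ?_
    rw [Matrix.smul_mul, Matrix.trace_smul, smul_eq_mul]
  have hR : ∀ r s : Fin n,
      ((φ (Matrix.single r s 1)) * (ψ (α' (Matrix.single s r 1)))).trace
        = ∑ i, ∑ k, α (Matrix.single k i 1) r s *
            ((φ (Matrix.single r s 1)) * (ψ (Matrix.single i k 1))).trace := by
    intro r s
    rw [phi_apply_eq_sum ψ (α' (Matrix.single s r 1)), Finset.mul_sum, Matrix.trace_sum]
    refine Finset.sum_congr rfl fun i _ => ?_
    rw [Finset.mul_sum, Matrix.trace_sum]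
    refine Finset.sum_congr rfl fun k _ => ?_
    rw [Matrix.mul_smul, Matrix.trace_smul, smul_eq_mul]
    have key : α' (Matrix.single s r 1) i k = α (Matrix.single k i 1) r s := by
      have := h (Matrix.single k i 1) (Matrix.single s r 1)
      rw [trace_mul_stdBasisMatrix] at this
      rw [stdBasisMatrix_mul_trace] at this
      exact this.symm
    rw [key]
  simp only [LinearMap.comp_apply, hL, hR]
  -- now reorder the four nested sums
  rw [sum4_swap]
  refine Finset.sum_congr rfl fun r _ => Finset.sum_congr rfl fun s _ => ?_
  exact Finset.sum_comm

/-- The inverse of the Choi correspondence. -/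
noncomputable def choiInv (x : BigMat n) : MatMap n where
  toFun a := Matrix.of fun j l => ∑ i, ∑ k, a i k * x (i, j) (k, l)
  map_add' a b := by
    ext j l
    simp [add_mul, Finset.sum_add_distrib]
  map_smul' c a := by
    ext j l
    simp [Finset.mul_sum, mul_assoc]

lemma choiMatrix_choiInv (x : BigMat n) : choiMatrix (choiInv x) = x := by
  ext ⟨i, j⟩ ⟨k, l⟩
  simp [choiMatrix, choiInv, Matrix.single, ite_and]

lemma idTensor_choiMatrix (α φ : MatMap n) :
    idTensor α (choiMatrix φ) = choiMatrix (α ∘ₗ φ) := rfl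

lemma stdBasisMatrix_transpose' (i k : Fin n) :
    (Matrix.single i k (1 : ℂ))ᵀ = Matrix.single k i 1 := by
  ext p q
  simp [Matrix.single, and_comm]

lemma choiMatrix_mapTranspose (φ : MatMap n) :
    choiMatrix (mapTranspose φ) = (choiMatrix φ)ᵀ := by
  ext ⟨i, j⟩ ⟨k, l⟩
  simp only [choiMatrix, Matrix.of_apply, Matrix.transpose_apply, mapTranspose,
    LinearMap.comp_apply, transposeMap]
  simp only [LinearMap.coe_mk, AddHom.coe_mk, Matrix.transpose_apply]
  rw [stdBasisMatrix_transpose']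

lemma mapTranspose_comp (α β : MatMap n) :
    mapTranspose (α ∘ₗ β) = mapTranspose α ∘ₗ mapTranspose β := by
  refine LinearMap.ext fun a => ?_
  simp [mapTranspose, transposeMap]

lemma mapTranspose_mapTranspose (φ : MatMap n) :
    mapTranspose (mapTranspose φ) = φ := by
  refine LinearMap.ext fun a => ?_
  simp [mapTranspose, transposeMap]

lemma pairT_transpose (μ ν : MatMap n) :
    pairT (mapTranspose μ) ν = pairT μ (mapTranspose ν) := by
  unfold pairT
  rw [choiMatrix_mapTranspose, choiMatrix_mapTranspose]
  have h1 : (choiMatrix μ)ᵀ * choiMatrix ν = ((choiMatrix ν)ᵀ * choiMatrix μ)ᵀ := by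
    rw [Matrix.transpose_mul, Matrix.transpose_transpose]
  rw [h1, Matrix.trace_transpose, Matrix.trace_mul_comm]

lemma IsCP.mapTranspose' {ψ : MatMap n} (h : IsCP ψ) : IsCP (mapTranspose ψ) := by
  rw [IsCP, choiMatrix_mapTranspose]
  exact h.transpose

/-- Quadratic form characterization of positive semidefiniteness over `ℂ`. -/
lemma posSemidef_of_forall_quad {m : Type*} [Fintype m] [DecidableEq m]
    (M : Matrix m m ℂ) (h : ∀ v : m → ℂ, 0 ≤ star v ⬝ᵥ M *ᵥ v) : M.PosSemidef := by
  have hc : ∀ v : m → ℂ, star v ⬝ᵥ Mᴴ *ᵥ v = star (star v ⬝ᵥ M *ᵥ v) := by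
    intro v
    rw [Matrix.dotProduct_mulVec]
    have h2 : star (star v ⬝ᵥ M *ᵥ v) = star (M *ᵥ v) ⬝ᵥ v := by
      rw [Matrix.star_dotProduct, star_star]
    rw [h2, Matrix.star_mulVec]
  have hzero : ∀ v : m → ℂ, star v ⬝ᵥ (M - Mᴴ) *ᵥ v = 0 := by
    intro v
    have h1 := h v
    have h2 : star (star v ⬝ᵥ M *ᵥ v) = star v ⬝ᵥ M *ᵥ v := by
      have him := (Complex.le_def.mp h1).2
      rw [Complex.ext_iff]
      constructor
      · simp
      · simp [← him]
    rw [Matrix.sub_mulVec, dotProduct_sub, hc v, h2, sub_self]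
  have hN : M - Mᴴ = 0 := by
    have h0 : ∀ x : EuclideanSpace ℂ m,
        inner ℂ ((Matrix.toEuclideanLin (M - Mᴴ)) x) x = (0 : ℂ) := by
      intro x
      have : inner ℂ ((Matrix.toEuclideanLin (M - Mᴴ)) x) x
          = star ((M - Mᴴ) *ᵥ (WithLp.equiv 2 (m → ℂ) x)) ⬝ᵥ (WithLp.equiv 2 (m → ℂ) x) := by
        rw [dotProduct_comm]; rfl
      rw [this, Matrix.star_dotProduct]
      rw [hzero]
      simp
    have := (inner_map_self_eq_zero (Matrix.toEuclideanLin (M - Mᴴ))).mp h0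
    exact (LinearEquiv.map_eq_zero_iff _).mp this
  refine Matrix.posSemidef_iff_dotProduct_mulVec.mpr ⟨?_, fun v => h v⟩
  unfold Matrix.IsHermitian
  have := sub_eq_zero.mp hN
  exact this.symm

lemma posSemidef_vecMulVec_star {m : Type*} [Fintype m] [DecidableEq m] (w : m → ℂ) :
    (Matrix.vecMulVec w (star w)).PosSemidef := by
  refine posSemidef_of_forall_quad _ fun v => ?_
  have key : star v ⬝ᵥ (Matrix.vecMulVec w (star w)) *ᵥ v
      = star (star w ⬝ᵥ v) * (star w ⬝ᵥ v) := by
    have h1 : star (star w ⬝ᵥ v) * (star w ⬝ᵥ v)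
        = (∑ p, star (v p) * w p) * (∑ q, star (w q) * v q) := by
      rw [← Matrix.star_dotProduct]
      simp [dotProduct]
    rw [h1, Finset.sum_mul_sum]
    simp only [dotProduct, Matrix.mulVec, Matrix.vecMulVec_apply, Pi.star_apply]
    refine Finset.sum_congr rfl fun p _ => ?_
    rw [Finset.mul_sum]
    refine Finset.sum_congr rfl fun q _ => ?_
    ring
  rw [key]
  exact star_mul_self_nonneg _

lemma trace_mul_vecMulVec {m : Type*} [Fintype m]
    (M : Matrix m m ℂ) (v : m → ℂ) :
    (M * Matrix.vecMulVec v (star v)).trace = star v ⬝ᵥ M *ᵥ v := by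
  simp only [Matrix.trace, Matrix.diag, Matrix.mul_apply, Matrix.vecMulVec_apply,
    dotProduct, Matrix.mulVec, Pi.star_apply]
  refine Finset.sum_congr rfl fun p _ => ?_
  rw [Finset.mul_sum]
  refine Finset.sum_congr rfl fun q _ => ?_
  ring

lemma trace_psd_nonneg {m : Type*} [Fintype m] {A : Matrix m m ℂ}
    (hA : A.PosSemidef) : 0 ≤ A.trace := by
  classical
  exact hA.trace_nonneg

lemma trace_mul_psd_nonneg {m : Type*} [Fintype m] [DecidableEq m]
    {A B : Matrix m m ℂ} (hA : A.PosSemidef) (hB : B.PosSemidef) :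
    0 ≤ (A * B).trace := by
  obtain ⟨k, v, rfl⟩ := Matrix.posSemidef_iff_eq_sum_vecMulVec.mp hA
  rw [Matrix.trace_mul_comm, Finset.mul_sum, Matrix.trace_sum]
  exact Finset.sum_nonneg fun i _ => by
    rw [trace_mul_vecMulVec]; exact (Matrix.posSemidef_iff_dotProduct_mulVec.mp hB).2 _

lemma id_isCP : IsCP (LinearMap.id : MatMap n) := by
  have hEq : choiMatrix (LinearMap.id : MatMap n)
      = Matrix.vecMulVec (fun p : Fin n × Fin n => if p.1 = p.2 then (1 : ℂ) else 0)
          (star fun p : Fin n × Fin n => if p.1 = p.2 then (1 : ℂ) else 0) := by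
    ext ⟨i, j⟩ ⟨k, l⟩
    simp only [choiMatrix, Matrix.of_apply, LinearMap.id_coe, id_eq, Matrix.single,
      Matrix.vecMulVec_apply, Pi.star_apply]
    split_ifs <;> simp_all
  rw [IsCP, hEq]
  exact posSemidef_vecMulVec_star _

end Aux

/-- Theorem 2. For a mapping cone `J` and `φ ∈ P`, the following
are equivalent: (i) `φ ∈ J°`; (ii) `φ ∘ α ∈ CP` for all `α ∈ J`; (iii) `α ∘ φ ∈ CP`
for all `α ∈ J`; (iv) `φ̃ ∘ (ι ⊗ α) ≥ 0` for all `α ∈ J`; (v) `(ι ⊗ α)(C_φ) ≥ 0`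
for all `α ∈ J`. -/
theorem statement_2 (n : ℕ) (J : Set (MatMap n)) (hJ : IsMappingCone J)
    (φ : MatMap n) (hφ : IsPosMap φ) :
    List.TFAE [φ ∈ dualCone J,
      ∀ α ∈ J, IsCP (φ ∘ₗ α),
      ∀ α ∈ J, IsCP (α ∘ₗ φ),
      ∀ α ∈ J, IsPosFunctional (tilde φ ∘ₗ idTensor α),
      ∀ α ∈ J, (idTensor α (choiMatrix φ)).PosSemidef] := by
  tfae_have 1 → 2 := by
    intro h1 α hα
    refine posSemidef_of_forall_quad _ fun v => ?_
    rw [← trace_mul_vecMulVec]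
    have hx : (Matrix.vecMulVec v (star v)).PosSemidef := posSemidef_vecMulVec_star v
    have hψ : IsCP (choiInv (Matrix.vecMulVec v (star v))) := by
      rw [IsCP, choiMatrix_choiInv]; exact hx
    have hadj : adjMap α ∈ J := hJ.adjoint_mem α hα _ (isAdjointPair_adjMap α)
    have hmem : choiInv (Matrix.vecMulVec v (star v)) ∘ₗ adjMap α ∈ J := by
      have := hJ.comp_mem (adjMap α) hadj (choiInv (Matrix.vecMulVec v (star v)))
        LinearMap.id hψ id_isCP
      rwa [LinearMap.comp_id] at this
    have heq : (choiMatrix (φ ∘ₗ α) * Matrix.vecMulVec v (star v)).trace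
        = pairT φ (choiInv (Matrix.vecMulVec v (star v)) ∘ₗ adjMap α) := by
      conv_lhs => rw [← choiMatrix_choiInv (Matrix.vecMulVec v (star v))]
      exact pairT_comp_right (isAdjointPair_adjMap α) φ _
    rw [heq]
    exact h1.2 _ hmem
  tfae_have 2 → 1 := by
    intro h2
    refine ⟨hφ, fun χ hχ => ?_⟩
    have hadj : adjMap χ ∈ J := hJ.adjoint_mem χ hχ _ (isAdjointPair_adjMap χ)
    have hCP : IsCP (φ ∘ₗ adjMap χ) := h2 _ hadj
    have hkey : pairT (φ ∘ₗ adjMap χ) LinearMap.id = pairT φ χ := by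
      rw [pairT_comp_right ((isAdjointPair_adjMap χ).symm) φ LinearMap.id,
        LinearMap.id_comp]
    have h0 : 0 ≤ pairT (φ ∘ₗ adjMap χ) LinearMap.id :=
      trace_mul_psd_nonneg hCP id_isCP
    show 0 ≤ pairT φ χ
    exact hkey ▸ h0
  tfae_have 1 → 3 := by
    intro h1 α hα
    refine posSemidef_of_forall_quad _ fun v => ?_
    rw [← trace_mul_vecMulVec]
    have hx : (Matrix.vecMulVec v (star v)).PosSemidef := posSemidef_vecMulVec_star v
    have hψ : IsCP (choiInv (Matrix.vecMulVec v (star v))) := by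
      rw [IsCP, choiMatrix_choiInv]; exact hx
    have hadj : adjMap α ∈ J := hJ.adjoint_mem α hα _ (isAdjointPair_adjMap α)
    have hmem : adjMap α ∘ₗ choiInv (Matrix.vecMulVec v (star v)) ∈ J := by
      have := hJ.comp_mem (adjMap α) hadj LinearMap.id
        (choiInv (Matrix.vecMulVec v (star v))) id_isCP hψ
      rwa [LinearMap.id_comp] at this
    have heq : (choiMatrix (α ∘ₗ φ) * Matrix.vecMulVec v (star v)).trace
        = pairT φ (adjMap α ∘ₗ choiInv (Matrix.vecMulVec v (star v))) := by
      conv_lhs => rw [← choiMatrix_choiInv (Matrix.vecMulVec v (star v))]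
      exact pairT_comp_left (isAdjointPair_adjMap α) φ _
    rw [heq]
    exact h1.2 _ hmem
  tfae_have 3 → 1 := by
    intro h3
    refine ⟨hφ, fun χ hχ => ?_⟩
    have hadj : adjMap χ ∈ J := hJ.adjoint_mem χ hχ _ (isAdjointPair_adjMap χ)
    have hCP : IsCP (adjMap χ ∘ₗ φ) := h3 _ hadj
    have hkey : pairT (adjMap χ ∘ₗ φ) LinearMap.id = pairT φ χ := by
      rw [pairT_comp_left ((isAdjointPair_adjMap χ).symm) φ LinearMap.id,
        LinearMap.comp_id]
    have h0 : 0 ≤ pairT (adjMap χ ∘ₗ φ) LinearMap.id :=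
      trace_mul_psd_nonneg hCP id_isCP
    show 0 ≤ pairT φ χ
    exact hkey ▸ h0
  tfae_have 3 → 5 := by
    intro h α hα
    rw [idTensor_choiMatrix]
    exact h α hα
  tfae_have 5 → 3 := by
    intro h α hα
    rw [IsCP, ← idTensor_choiMatrix]
    exact h α hα
  tfae_have 1 → 4 := by
    intro h1 α hα x hx
    have hψ : IsCP (choiInv x) := by rw [IsCP, choiMatrix_choiInv]; exact hx
    have heq : (tilde φ ∘ₗ idTensor α) x
        = pairT (mapTranspose φ) (α ∘ₗ choiInv x) := by
      show ((choiMatrix φ)ᵀ * idTensor α x).trace = _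
      conv_lhs => rw [← choiMatrix_choiInv x]
      rw [← choiMatrix_mapTranspose, idTensor_choiMatrix]
      rfl
    rw [heq, pairT_transpose]
    have hmem : mapTranspose (α ∘ₗ choiInv x) ∈ J := by
      rw [mapTranspose_comp]
      have hα' : mapTranspose α ∈ J := hJ.transpose_mem α hα
      have hψ' : IsCP (mapTranspose (choiInv x)) := hψ.mapTranspose'
      have := hJ.comp_mem (mapTranspose α) hα' LinearMap.id
        (mapTranspose (choiInv x)) id_isCP hψ'
      rwa [LinearMap.id_comp] at this
    exact h1.2 _ hmem
  tfae_have 4 → 1 := by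
    intro h4
    refine ⟨hφ, fun χ hχ => ?_⟩
    have hχ' : mapTranspose χ ∈ J := hJ.transpose_mem χ hχ
    have h0 := h4 (mapTranspose χ) hχ' (choiMatrix (LinearMap.id : MatMap n)) id_isCP
    have heq : (tilde φ ∘ₗ idTensor (mapTranspose χ)) (choiMatrix (LinearMap.id : MatMap n))
        = pairT φ χ := by
      show ((choiMatrix φ)ᵀ *
        idTensor (mapTranspose χ) (choiMatrix (LinearMap.id : MatMap n))).trace = _
      rw [idTensor_choiMatrix, LinearMap.comp_id, ← choiMatrix_mapTranspose]
      have h5 : (choiMatrix (mapTranspose φ) * choiMatrix (mapTranspose χ)).trace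
          = pairT (mapTranspose φ) (mapTranspose χ) := rfl
      rw [h5, pairT_transpose, mapTranspose_mapTranspose]
    rw [heq] at h0
    exact h0
  tfae_finish

end Paper
end

section
/- Let J be a mapping cone, let a ∈ M_n, and let e be the range projection of a. Then Ad e ∈ J if and only if Ad a ∈ J. -/
open scoped ComplexOrder Kronecker
open Matrix

namespace Paper

variable {n : ℕ}

private lemma adMap_comp' {n : ℕ} (V W : Mat n) : adMap W ∘ₗ adMap V = adMap (V * W) := by
  ext x : 1
  simp [adMap, Matrix.conjTranspose_mul, Matrix.mul_assoc]

private lemma adMap_isCP {n : ℕ} (V : Mat n) : IsCP (adMap V) := by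
  have h : choiMatrix (adMap V)
      = (Matrix.of fun (_ : Fin 1) (p : Fin n × Fin n) => V p.1 p.2)ᴴ *
        (Matrix.of fun (_ : Fin 1) (p : Fin n × Fin n) => V p.1 p.2) := by
    ext p q
    simp [choiMatrix, adMap, Matrix.mul_apply, Matrix.single, ite_and]
  rw [IsCP, h]
  exact Matrix.posSemidef_conjTranspose_mul_self _

private lemma exists_proj_matrix {n : ℕ} (a : Mat n) :
    ∃ f : Mat n, f * f = f ∧ fᴴ = f ∧ f * a = a ∧
      ∀ v : Fin n → ℂ, ∃ u, a *ᵥ u = f *ᵥ v := by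
  classical
  set E := EuclideanSpace ℂ (Fin n)
  set T : E →ₗ[ℂ] E := Matrix.toEuclideanLin a with hT
  set S : Submodule ℂ E := LinearMap.range T with hS
  set P : E →L[ℂ] E := S.subtypeL ∘L S.orthogonalProjectionOnto with hP
  set f : Mat n := Matrix.toEuclideanLin.symm (P : E →ₗ[ℂ] E) with hf
  have hfP : Matrix.toEuclideanLin f = (P : E →ₗ[ℂ] E) := by
    simp [hf]
  have hPS : ∀ x : E, P x ∈ S := fun x => (S.orthogonalProjectionOnto x).2
  have hPid : ∀ x ∈ S, P x = x := fun x hx => by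
    exact Submodule.starProjection_eq_self_iff.mpr hx
  have hmul : ∀ A B : Mat n,
      Matrix.toEuclideanLin (A * B) = Matrix.toEuclideanLin A ∘ₗ Matrix.toEuclideanLin B := by
    intro A B
    rw [Matrix.toEuclideanLin_eq_toLin_orthonormal,
      Matrix.toLin_mul _ (EuclideanSpace.basisFun (Fin n) ℂ).toBasis]
  refine ⟨f, ?_, ?_, ?_, ?_⟩
  · apply Matrix.toEuclideanLin.injective
    rw [hmul, hfP]
    exact LinearMap.ext fun x => hPid (P x) (hPS x)
  · apply Matrix.toEuclideanLin.injective
    rw [Matrix.toEuclideanLin_conjTranspose_eq_adjoint, hfP]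
    have h1 : IsSelfAdjoint P := isSelfAdjoint_starProjection S
    exact (LinearMap.isSymmetric_iff_isSelfAdjoint _).mp h1.isSymmetric
  · apply Matrix.toEuclideanLin.injective
    rw [hmul, hfP, ← hT]
    exact LinearMap.ext fun x => hPid (T x) (LinearMap.mem_range_self T x)
  · intro v
    obtain ⟨u, hu⟩ := hPS ((WithLp.equiv 2 (Fin n → ℂ)).symm v)
    refine ⟨WithLp.equiv 2 (Fin n → ℂ) u, ?_⟩
    have h1 : Matrix.toEuclideanLin a u
        = Matrix.toEuclideanLin f ((WithLp.equiv 2 (Fin n → ℂ)).symm v) := by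
      rw [hfP]; exact hu
    have h2 := congrArg (WithLp.equiv 2 (Fin n → ℂ)) h1
    rw [WithLp.equiv_apply, WithLp.equiv_apply, Matrix.piLp_ofLp_toEuclideanLin, Matrix.piLp_ofLp_toEuclideanLin] at h2
    simpa [Matrix.toLin'_apply] using h2

private lemma exists_right_factor {n : ℕ} {a e : Mat n} (he : IsRangeProjection e a) :
    ∃ g : Mat n, a * g = e := by
  classical
  obtain ⟨f, hff, hfh, hfa, hcol⟩ := exists_proj_matrix a
  have hfe : f * e = e := he.2.2 f ⟨hff, hfh⟩ hfa
  choose u hu using hcol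
  refine ⟨Matrix.of fun i j => u (fun k => e k j) i, ?_⟩
  ext i j
  have h1 : (a *ᵥ u (fun k => e k j)) i = (f *ᵥ fun k => e k j) i := by
    rw [hu]
  have h2 : (f *ᵥ fun k => e k j) i = (f * e) i j := rfl
  calc (a * Matrix.of fun i j => u (fun k => e k j) i) i j
      = (a *ᵥ u (fun k => e k j)) i := by
        simp [Matrix.mul_apply, Matrix.mulVec, dotProduct]
    _ = e i j := by rw [h1, h2, hfe]

/-- Remark. If `J` is a mapping cone, `a ∈ M_n` and `e` is the
range projection of `a`, then `Ad e ∈ J` iff `Ad a ∈ J`. -/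
theorem statement_5 (n : ℕ) (J : Set (MatMap n)) (hJ : IsMappingCone J)
    (a e : Mat n) (he : IsRangeProjection e a) :
    adMap e ∈ J ↔ adMap a ∈ J := by
  obtain ⟨⟨hee, heh⟩, hea, hmin⟩ := he
  constructor
  · intro h
    have hm := hJ.comp_mem (adMap e) h (adMap a) (adMap 1) (adMap_isCP a) (adMap_isCP 1)
    have : adMap a ∘ₗ adMap e ∘ₗ adMap 1 = adMap a := by
      rw [adMap_comp' 1 e, one_mul, adMap_comp' e a, hea]
    rwa [this] at hm
  · intro h
    obtain ⟨g, hg⟩ := exists_right_factor ⟨⟨hee, heh⟩, hea, hmin⟩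
    have hm := hJ.comp_mem (adMap a) h (adMap g) (adMap 1) (adMap_isCP g) (adMap_isCP 1)
    have : adMap g ∘ₗ adMap a ∘ₗ adMap 1 = adMap e := by
      rw [adMap_comp' 1 a, one_mul, adMap_comp' a g, hg]
    rwa [this] at hm

end Paper
end

section
/- Let J be an invariant mapping cone and let k = max{rank(e) : e a projection in M_n with Ad e ∈ J}, and assume k ≥ 2. If e is a projection in M_n with rank(e) ≤ k, then Ad e ∈ J. -/
open scoped ComplexOrder Kronecker
open Matrix

namespace Paper

variable {n : ℕ}

/-- Diagonalize a projection via a unitary. -/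
lemma proj_diag (e : Mat n) (he : e * e = e) (hh : eᴴ = e) :
    ∃ (U : Mat n) (v : Fin n → ℂ),
      star U * U = 1 ∧ U * star U = 1 ∧
      e = U * diagonal v * star U ∧ (∀ i, v i * v i = v i) ∧
        e.rank = Fintype.card {i // v i ≠ 0} := by
  have hherm : e.IsHermitian := hh
  set U : Mat n := (hherm.eigenvectorUnitary : Mat n) with hUdef
  set v : Fin n → ℂ := (RCLike.ofReal ∘ hherm.eigenvalues) with hvdef
  have hU1 : star U * U = 1 := Matrix.mem_unitaryGroup_iff'.mp hherm.eigenvectorUnitary.2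
  have hU2 : U * star U = 1 := Matrix.mem_unitaryGroup_iff.mp hherm.eigenvectorUnitary.2
  have hcan1 : ∀ X : Mat n, star U * (U * X) = X := fun X => by
    rw [← mul_assoc, hU1, one_mul]
  have hcan2 : ∀ X : Mat n, U * (star U * X) = X := fun X => by
    rw [← mul_assoc, hU2, one_mul]
  have hspec : e = U * diagonal v * star U := hherm.spectral_theorem
  have hDeq : diagonal v = star U * e * U := by
    rw [hspec]
    simp only [mul_assoc, hcan1, hU1, mul_one]
  have hdetU : IsUnit U.det := Matrix.isUnit_det_of_right_inverse hU2
  have hdetsU : IsUnit (star U).det := Matrix.isUnit_det_of_right_inverse hU1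
  refine ⟨U, v, hU1, hU2, hspec, ?_, ?_⟩
  · intro i
    have hd : diagonal v * diagonal v = diagonal v := by
      rw [hDeq]
      simp only [mul_assoc, hcan2]
      rw [← mul_assoc e e, he]
    have := congrFun (congrFun hd i) i
    simpa [Matrix.diagonal_mul_diagonal, Matrix.diagonal_apply_eq] using this
  · rw [hspec, Matrix.rank_mul_eq_left_of_isUnit_det _ _ hdetsU,
      Matrix.rank_mul_eq_right_of_isUnit_det _ _ hdetU, Matrix.rank_diagonal]

/-- Key conjugation lemma. -/
lemma exists_conj (e f : Mat n) (he : e * e = e) (heh : eᴴ = e)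
    (hf : f * f = f) (hfh : fᴴ = f) (hr : e.rank ≤ f.rank) :
    ∃ V : Mat n, Vᴴ * f * V = e := by
  obtain ⟨U, v, hU1, hU2, hespec, hvi, hvrank⟩ := proj_diag e he heh
  obtain ⟨W, w, hW1, hW2, hfspec, hwi, hwrank⟩ := proj_diag f hf hfh
  rw [hvrank, hwrank] at hr
  obtain ⟨σ⟩ := Function.Embedding.nonempty_of_card_le hr
  classical
  set M : Mat n := Matrix.of (fun i j =>
    if h : v j ≠ 0 then (if ((σ ⟨j, h⟩ : {i // w i ≠ 0}) : Fin n) = i then (1:ℂ) else 0) else 0)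
    with hMdef
  have hMapp : ∀ i j, M i j =
      if h : v j ≠ 0 then (if ((σ ⟨j, h⟩ : {i // w i ≠ 0}) : Fin n) = i then (1:ℂ) else 0) else 0 :=
    fun i j => rfl
  have hM : Mᴴ * diagonal w * M = diagonal v := by
    rw [mul_assoc]
    ext j j'
    rw [Matrix.mul_apply]
    simp only [Matrix.conjTranspose_apply, Matrix.diagonal_mul, Matrix.diagonal_apply]
    by_cases hj : v j ≠ 0
    · by_cases hj' : v j' ≠ 0
      · rw [Finset.sum_eq_single ((σ ⟨j', hj'⟩ : {i // w i ≠ 0}) : Fin n)]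
        · simp only [hMapp, dif_pos hj, dif_pos hj']
          by_cases hjj : j = j'
          · subst hjj
            simp only [if_pos rfl, star_one, one_mul, mul_one]
            have h1 : w ((σ ⟨j, hj⟩ : {i // w i ≠ 0}) : Fin n) = 1 := by
              have hne := (σ ⟨j, hj⟩).2
              have := hwi ((σ ⟨j, hj⟩ : {i // w i ≠ 0}) : Fin n)
              field_simp at this
              tauto
            have h2 : v j = 1 := by
              have := hvi j; field_simp at this; tauto
            simp [h1, h2]
          · have hσ : ((σ ⟨j, hj⟩ : {i // w i ≠ 0}) : Fin n) ≠
                ((σ ⟨j', hj'⟩ : {i // w i ≠ 0}) : Fin n) := by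
              intro hco
              exact hjj (congrArg Subtype.val (σ.injective (Subtype.ext hco)))
            simp [if_neg hσ, if_neg hjj, if_neg (Ne.symm hjj)]
        · intro i _ hi
          simp only [hMapp, dif_pos hj']
          rw [if_neg (fun hc => hi hc.symm)]
          simp
        · simp
      · push_neg at hj'
        have hjj : j ≠ j' := fun hc => hj (hc ▸ hj')
        simp only [hMapp, dif_neg (not_not.mpr hj')]
        simp [if_neg hjj, if_neg (Ne.symm hjj)]
    · push_neg at hj
      simp only [hMapp, dif_neg (not_not.mpr hj)]
      simp only [star_zero, zero_mul, mul_zero, Finset.sum_const_zero]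
      by_cases hjj : j = j'
      · subst hjj; simp [hj]
      · simp [hjj]
  refine ⟨W * M * star U, ?_⟩
  have haux : (W * M * star U)ᴴ = U * Mᴴ * star W := by
    simp [Matrix.conjTranspose_mul, Matrix.star_eq_conjTranspose, mul_assoc]
  have hcanW : ∀ X : Mat n, star W * (W * X) = X := fun X => by
    rw [← mul_assoc, hW1, one_mul]
  rw [haux, hfspec]
  calc U * Mᴴ * star W * (W * diagonal w * star W) * (W * M * star U)
      = U * (Mᴴ * (star W * (W * (diagonal w * (star W * (W * (M * star U))))))) := by
        simp only [mul_assoc]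
    _ = U * (Mᴴ * (diagonal w * (M * star U))) := by rw [hcanW, hcanW]
    _ = U * (Mᴴ * diagonal w * M) * star U := by simp only [mul_assoc]
    _ = e := by rw [hM, ← hespec]

lemma isPosMap_adMap (V : Mat n) : IsPosMap (adMap V) := by
  intro a ha
  exact ha.conjTranspose_mul_mul_same V

/-- Theorem 5 (ii). Let `J` be an invariant mapping cone and
`k = max {rank e : Ad e ∈ J} ≥ 2`.  If `e` is a projection with `rank e ≤ k`,
then `Ad e ∈ J`. -/
theorem statement_7 (n : ℕ) (J : Set (MatMap n)) (hJ : IsInvariantMappingCone J)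
    (k : ℕ)
    (hmax : ∃ e : Mat n, IsProjection e ∧ adMap e ∈ J ∧ e.rank = k)
    (hbound : ∀ e : Mat n, IsProjection e → adMap e ∈ J → e.rank ≤ k)
    (hk : 2 ≤ k)
    (e : Mat n) (he : IsProjection e) (hrank : e.rank ≤ k) :
    adMap e ∈ J := by
  obtain ⟨f, hfproj, hfJ, hfrank⟩ := hmax
  have hr : e.rank ≤ f.rank := by rw [hfrank]; exact hrank
  obtain ⟨V, hV⟩ := exists_conj e f he.1 he.2 hfproj.1 hfproj.2 hr
  have hcomp : adMap V ∘ₗ adMap f ∘ₗ adMap Vᴴ = adMap e := by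
    apply LinearMap.ext; intro x
    show Vᴴ * (fᴴ * (Vᴴᴴ * x * Vᴴ) * f) * V = eᴴ * x * e
    rw [hfproj.2, he.2, Matrix.conjTranspose_conjTranspose, ← hV]
    simp only [mul_assoc]
  rw [← hcomp]
  exact hJ.comp_pos_mem (adMap f) hfJ (adMap V) (adMap Vᴴ)
    (isPosMap_adMap V) (isPosMap_adMap Vᴴ)

end Paper
end
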